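/- Let m ≥ 1. For all z, w ∈ ℝ^m with ‖z‖ = ‖w‖ = 1 and all s, t ∈ ℝ, the squared Euclidean distance in ℝ^m × ℝ between the points (w · sech t, tanh t) and (z · sech s, tanh s) equals sech t · sech s · ( (2 sinh((t − s)/2))² + ‖w − z‖² ), where sech r = 1 / cosh r. -/

import Mathlib

/-- **Distance identity for the Mercator cylindrical projection.**
For unit vectors `z, w ∈ ℝ^m` and reals `s, t`, the squared Euclidean distance in
`ℝ^m × ℝ` between `(w sech t, tanh t)` and `(z sech s, tanh s)` equals
`sech t · sech s · ((2 sinh((t − s)/2))² + ‖w − z‖²)`. -/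
theorem mercator_distance_identity (m : ℕ) (hm : 1 ≤ m)
    (z w : EuclideanSpace ℝ (Fin m)) (hz : ‖z‖ = 1) (hw : ‖w‖ = 1) (s t : ℝ) :
    ‖(Real.cosh t)⁻¹ • w - (Real.cosh s)⁻¹ • z‖ ^ 2 + (Real.tanh t - Real.tanh s) ^ 2 =
      (Real.cosh t)⁻¹ * (Real.cosh s)⁻¹ *
        ((2 * Real.sinh ((t - s) / 2)) ^ 2 + ‖w - z‖ ^ 2) := by
  have hip : ∀ a b : ℝ, ‖a • w - b • z‖ ^ 2 =
      a ^ 2 - 2 * (a * b * inner ℝ w z) + b ^ 2 := by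
    intro a b
    rw [norm_sub_sq_real, norm_smul, norm_smul, real_inner_smul_left,
      real_inner_smul_right, hw, hz]
    simp [mul_pow, sq_abs]
    ring
  have h1 := hip (Real.cosh t)⁻¹ (Real.cosh s)⁻¹
  have h2 : ‖w - z‖ ^ 2 = 2 - 2 * inner ℝ w z := by
    have := hip 1 1
    simp only [one_smul, one_pow, one_mul] at this
    linarith
  rw [h1, h2]
  have hct := Real.cosh_pos t
  have hcs := Real.cosh_pos s
  have hsh : (2 * Real.sinh ((t - s) / 2)) ^ 2 = 2 * Real.cosh (t - s) - 2 := by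
    have h2m : Real.cosh (2 * ((t - s) / 2)) =
        Real.cosh ((t - s) / 2) ^ 2 + Real.sinh ((t - s) / 2) ^ 2 :=
      Real.cosh_two_mul _
    have h3 : Real.cosh (t - s) = 2 * Real.sinh ((t - s) / 2) ^ 2 + 1 := by
      rw [show t - s = 2 * ((t - s) / 2) by ring, h2m, Real.cosh_sq]
      ring
    rw [h3]; ring
  have hct2 := Real.cosh_sq t
  have hcs2 := Real.cosh_sq s
  have key : (Real.cosh t)⁻¹ ^ 2 + (Real.cosh s)⁻¹ ^ 2 + (Real.tanh t - Real.tanh s) ^ 2 =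
      (Real.cosh t)⁻¹ * (Real.cosh s)⁻¹ *
        (2 * (Real.cosh t * Real.cosh s - Real.sinh t * Real.sinh s)) := by
    rw [Real.tanh_eq_sinh_div_cosh, Real.tanh_eq_sinh_div_cosh]
    field_simp
    linear_combination (-(Real.cosh s ^ 2)) * hct2 -
      (Real.cosh t ^ 2) * hcs2
  rw [hsh, Real.cosh_sub]
  linear_combination key
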